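/- Let X be a compact metrizable space and N a closed (hence compact) subset of the space of Borel probability measures on X. Suppose X has the N-SBP. Let A be a closed N-small subset of X, let V be an open set with A ⊆ V, and let ε > 0. Then there is an open set U with A ⊆ U ⊆ closure(U) ⊆ V, ∂U is N-small, and μ(U) < ε for all μ ∈ N. -/

import Mathlib

open MeasureTheory Topology

/-- A Borel set is `N`-small if it is null for every measure in `N`. -/
def NSmall {X : Type*} [TopologicalSpace X] [MeasurableSpace X]
    (N : Set (ProbabilityMeasure X)) (A : Set X) : Prop :=
  ∀ μ ∈ N, (μ : Measure X) A = 0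

/-- `X` has the `N`-SBP if its topology has a basis of open sets with `N`-small boundary. -/
def NSBP {X : Type*} [TopologicalSpace X] [MeasurableSpace X]
    (N : Set (ProbabilityMeasure X)) : Prop :=
  ∃ B : Set (Set X), TopologicalSpace.IsTopologicalBasis B ∧ ∀ U ∈ B, NSmall N (frontier U)

section ProkhorovAux

open Filter Set BoundedContinuousFunction


section RCont
variable {X : Type*} [TopologicalSpace X] [CompactSpace X] [T2Space X]

noncomputable def bcfOfCc : CompactlySupportedContinuousMap X NNReal →ₗ[NNReal] (X →ᵇ NNReal) where
  toFun f := f.toBoundedContinuousFunction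
  map_add' _ _ := BoundedContinuousFunction.ext fun _ => rfl
  map_smul' _ _ := BoundedContinuousFunction.ext fun _ => rfl

lemma rcle (Λ : (X →ᵇ NNReal) →ₗ[NNReal] NNReal) {K : TopologicalSpace.Compacts X}
    {f : X →ᵇ NNReal} (h : ∀ x ∈ K, (1 : NNReal) ≤ f x) :
    rieszContentAux (Λ.comp bcfOfCc) K ≤ Λ f :=
  rieszContentAux_le (Λ.comp bcfOfCc)
    (f := CompactlySupportedContinuousMap.continuousMapEquiv f.toContinuousMap) h

lemma riesz_sup_disjoint (Λ : (X →ᵇ NNReal) →ₗ[NNReal] NNReal)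
    (K₁ K₂ : TopologicalSpace.Compacts X) (hd : Disjoint (K₁ : Set X) K₂) :
    rieszContentAux (Λ.comp bcfOfCc) (K₁ ⊔ K₂) =
      rieszContentAux (Λ.comp bcfOfCc) K₁ + rieszContentAux (Λ.comp bcfOfCc) K₂ :=
  rieszContentAux_union _ hd

/-- The content associated to a positive linear functional. -/
noncomputable def rieszContentOf (Λ : (X →ᵇ NNReal) →ₗ[NNReal] NNReal) : Content X where
  toFun := rieszContentAux (Λ.comp bcfOfCc)
  mono' := fun K₁ K₂ h => rieszContentAux_mono _ h
  sup_disjoint' := fun K₁ K₂ hd _ _ => riesz_sup_disjoint Λ K₁ K₂ hd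
  sup_le' := rieszContentAux_sup_le _

end RCont

lemma rieszContentOf_apply {Y : Type*} [TopologicalSpace Y] [CompactSpace Y] [T2Space Y]
    (Λ : (Y →ᵇ NNReal) →ₗ[NNReal] NNReal) (K : TopologicalSpace.Compacts Y) :
    (rieszContentOf Λ) K = (rieszContentAux (Λ.comp bcfOfCc) K : ENNReal) := rfl

section Prok
variable {X : Type*} [MetricSpace X] [CompactSpace X] [MeasurableSpace X] [BorelSpace X]

lemma bcnn_separable' : TopologicalSpace.SeparableSpace (X →ᵇ NNReal) := by
  have : TopologicalSpace.SeparableSpace C(X, NNReal) := inferInstance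
  exact (ContinuousMap.isometryEquivBoundedOfCompact X NNReal).toHomeomorph
    |>.isQuotientMap.separableSpace

omit [CompactSpace X] [BorelSpace X] in
lemma test_mem_Icc (μ : ProbabilityMeasure X) (f : X →ᵇ NNReal) :
    μ.toFiniteMeasure.testAgainstNN f ∈ Icc (0 : NNReal) (nndist 0 f) := by
  refine ⟨zero_le, ?_⟩
  rw [← ENNReal.coe_le_coe, FiniteMeasure.testAgainstNN_coe_eq]
  calc ∫⁻ x, (f x : ENNReal) ∂(μ : Measure X) ≤ edist 0 f * (μ : Measure X) univ :=
        f.lintegral_le_edist_mul _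
    _ = (nndist 0 f : ENNReal) := by rw [measure_univ, mul_one, edist_nndist]

lemma exists_subseq_test_tendsto (μs : ℕ → ProbabilityMeasure X) :
    ∃ φ : ℕ → ℕ, StrictMono φ ∧ ∀ f : X →ᵇ NNReal,
      ∃ L : NNReal, Tendsto (fun n => (μs (φ n)).toFiniteMeasure.testAgainstNN f) atTop (𝓝 L) := by
  haveI := bcnn_separable' (X := X)
  haveI : Nonempty (X →ᵇ NNReal) := ⟨0⟩
  set d : ℕ → (X →ᵇ NNReal) := TopologicalSpace.denseSeq (X →ᵇ NNReal) with hd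
  have hdense : DenseRange d := TopologicalSpace.denseRange_denseSeq _
  set s : Set (ℕ → NNReal) := univ.pi (fun j => Icc (0 : NNReal) (nndist 0 (d j))) with hs
  have hsc : IsCompact s := isCompact_univ_pi (fun j => isCompact_Icc)
  set y : ℕ → (ℕ → NNReal) := fun n j => (μs n).toFiniteMeasure.testAgainstNN (d j) with hy
  have hmem : ∀ n, y n ∈ s := fun n j _ => test_mem_Icc _ _
  obtain ⟨p, -, φ, hφ, hconv⟩ := hsc.tendsto_subseq hmem
  refine ⟨φ, hφ, fun f => ?_⟩
  have hptwise : ∀ j, Tendsto (fun n => (μs (φ n)).toFiniteMeasure.testAgainstNN (d j))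
      atTop (𝓝 (p j)) := by
    intro j
    exact (continuous_apply j).continuousAt.tendsto.comp hconv
  have hcauchy : CauchySeq (fun n => (μs (φ n)).toFiniteMeasure.testAgainstNN f) := by
    rw [Metric.cauchySeq_iff]
    intro ε hε
    obtain ⟨j, hj⟩ : ∃ j, dist f (d j) < ε / 3 := by
      obtain ⟨j, hj⟩ := Metric.denseRange_iff.mp hdense f (ε / 3) (by linarith)
      exact ⟨j, hj⟩
    obtain ⟨N, hN⟩ := Metric.cauchySeq_iff.mp (hptwise j).cauchySeq (ε / 3) (by linarith)
    refine ⟨N, fun m hm n hn => ?_⟩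
    have key : ∀ k, dist ((μs (φ k)).toFiniteMeasure.testAgainstNN f)
        ((μs (φ k)).toFiniteMeasure.testAgainstNN (d j)) ≤ ε / 3 := by
      intro k
      have := ((μs (φ k)).toFiniteMeasure.testAgainstNN_lipschitz).dist_le_mul f (d j)
      rw [(μs (φ k)).mass_toFiniteMeasure] at this
      simpa using this.trans (by simpa using hj.le)
    calc dist ((μs (φ m)).toFiniteMeasure.testAgainstNN f)
          ((μs (φ n)).toFiniteMeasure.testAgainstNN f)
        ≤ dist ((μs (φ m)).toFiniteMeasure.testAgainstNN f)
            ((μs (φ m)).toFiniteMeasure.testAgainstNN (d j))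
          + dist ((μs (φ m)).toFiniteMeasure.testAgainstNN (d j))
            ((μs (φ n)).toFiniteMeasure.testAgainstNN (d j))
          + dist ((μs (φ n)).toFiniteMeasure.testAgainstNN (d j))
            ((μs (φ n)).toFiniteMeasure.testAgainstNN f) := dist_triangle4 _ _ _ _
      _ < ε / 3 + ε / 3 + ε / 3 := by
          have h1 := key m
          have h2 := hN m hm n hn
          have h3 := key n
          rw [dist_comm] at h3
          linarith
      _ = ε := by ring
  exact cauchySeq_tendsto_of_complete hcauchy

lemma prokhorov_subseq (μs : ℕ → ProbabilityMeasure X) :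
    ∃ (φ : ℕ → ℕ) (ν : ProbabilityMeasure X), StrictMono φ ∧
      Tendsto (μs ∘ φ) atTop (𝓝 ν) := by
  obtain ⟨φ, hφ, hlim⟩ := exists_subseq_test_tendsto μs
  choose L hL using hlim
  have hadd : ∀ f g, L (f + g) = L f + L g := by
    intro f g
    refine tendsto_nhds_unique (hL (f + g)) ?_
    have : (fun n => (μs (φ n)).toFiniteMeasure.testAgainstNN (f + g))
        = fun n => (μs (φ n)).toFiniteMeasure.testAgainstNN f
          + (μs (φ n)).toFiniteMeasure.testAgainstNN g := by
      funext n; exact FiniteMeasure.testAgainstNN_add _ f g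
    rw [this]
    exact (hL f).add (hL g)
  have hsmul : ∀ (c : NNReal) f, L (c • f) = c • L f := by
    intro c f
    refine tendsto_nhds_unique (hL (c • f)) ?_
    have : (fun n => (μs (φ n)).toFiniteMeasure.testAgainstNN (c • f))
        = fun n => c • (μs (φ n)).toFiniteMeasure.testAgainstNN f := by
      funext n; exact FiniteMeasure.testAgainstNN_smul _ c f
    rw [this]
    simpa [smul_eq_mul] using (hL f).const_mul c
  set Λ : (X →ᵇ NNReal) →ₗ[NNReal] NNReal :=
    { toFun := L, map_add' := hadd, map_smul' := hsmul } with hΛ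
  have hmono : ∀ f g : X →ᵇ NNReal, (f : X → NNReal) ≤ g → L f ≤ L g := by
    intro f g hfg
    exact le_of_tendsto_of_tendsto' (hL f) (hL g)
      (fun n => FiniteMeasure.testAgainstNN_mono _ hfg)
  have hone : L 1 = 1 := by
    refine tendsto_nhds_unique (hL 1) ?_
    have : (fun n => (μs (φ n)).toFiniteMeasure.testAgainstNN 1) = fun _ => 1 := by
      funext n
      rw [FiniteMeasure.testAgainstNN_one, ProbabilityMeasure.mass_toFiniteMeasure]
    rw [this]
    exact tendsto_const_nhds
  set μc : Content X := rieszContentOf Λ with hμc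
  set ν₀ : Measure X := μc.measure with hν₀
  have hΛapp : ∀ f, Λ f = L f := fun f => rfl
  have hopen : ∀ (G : Set X) (hG : IsOpen G),
      ν₀ G = μc.innerContent ⟨G, hG⟩ := by
    intro G hG
    rw [hν₀, μc.measure_apply hG.measurableSet]
    exact μc.outerMeasure_opens ⟨G, hG⟩
  have hprob : IsProbabilityMeasure ν₀ := by
    constructor
    rw [hopen univ isOpen_univ]
    refine le_antisymm ?_ ?_
    · rw [Content.innerContent]
      refine iSup₂_le fun K _ => ?_
      rw [rieszContentOf_apply]
      have := rcle Λ (K := K) (f := 1) (fun x _ => by simp)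
      rw [hΛapp, hone] at this
      exact_mod_cast this
    · refine le_trans ?_ (μc.le_innerContent ⟨univ, isCompact_univ⟩ _ (by simp))
      rw [rieszContentOf_apply]
      have : (1 : NNReal) ≤ rieszContentAux (Λ.comp bcfOfCc) ⟨univ, isCompact_univ⟩ := by
        rw [rieszContentAux]
        apply le_csInf (rieszContentAux_image_nonempty (Λ.comp bcfOfCc) _)
        rintro b ⟨f, hf, rfl⟩
        calc (1 : NNReal) = L 1 := hone.symm
          _ ≤ L (bcfOfCc f) := hmono _ _ (fun x => by exact (by simpa using hf x trivial : (1 : NNReal) ≤ f x))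
      exact_mod_cast this
  have hliminf : ∀ (G : Set X), IsOpen G →
      ν₀ G ≤ atTop.liminf (fun n => (μs (φ n) : Measure X) G) := by
    intro G hG
    rw [hopen G hG, Content.innerContent]
    apply iSup₂_le
    intro K hKG
    have hKG' : (K : Set X) ⊆ G := hKG
    obtain ⟨g, hg0, hg1, hg01⟩ := exists_continuous_zero_one_of_isCompact
      (hG.isClosed_compl.isCompact) K.isCompact.isClosed
      (Set.disjoint_left.mpr fun x hx hxK => hx (hKG' hxK))
    set cnn : C(X, NNReal) := ⟨fun x => ⟨g x, (hg01 x).1⟩, g.continuous.subtype_mk _⟩ with hcnn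
    set fnn : X →ᵇ NNReal := mkOfCompact cnn with hfnn
    have h1 : (μc K : ENNReal) ≤ (L fnn : ENNReal) := by
      rw [rieszContentOf_apply]
      apply ENNReal.coe_le_coe.mpr
      rw [← hΛapp]
      apply rcle Λ
      intro x hx
      show (1 : NNReal) ≤ cnn x
      rw [show cnn x = ⟨g x, (hg01 x).1⟩ from rfl]
      exact Subtype.mk_le_mk.mpr (le_of_eq (hg1 hx).symm)
    have h2 : ∀ n, ((μs (φ n)).toFiniteMeasure.testAgainstNN fnn : ENNReal)
        ≤ (μs (φ n) : Measure X) G := by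
      intro n
      rw [FiniteMeasure.testAgainstNN_coe_eq]
      calc ∫⁻ x, (fnn x : ENNReal) ∂(μs (φ n) : Measure X)
          ≤ ∫⁻ x, G.indicator (fun _ => (1 : ENNReal)) x ∂(μs (φ n) : Measure X) := by
            apply lintegral_mono
            intro x
            by_cases hx : x ∈ G
            · rw [indicator_of_mem hx]
              show (fnn x : ENNReal) ≤ 1
              exact_mod_cast (show (fnn x : NNReal) ≤ 1 from
                Subtype.mk_le_mk.mpr (hg01 x).2)
            · rw [indicator_of_notMem hx]
              have : fnn x = 0 := Subtype.ext (hg0 hx)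
              simp [this]
        _ = (μs (φ n) : Measure X) G := by
            rw [lintegral_indicator hG.measurableSet]
            simp
    have h3 : Tendsto (fun n => ((μs (φ n)).toFiniteMeasure.testAgainstNN fnn : ENNReal))
        atTop (𝓝 (L fnn : ENNReal)) := ENNReal.tendsto_coe.mpr (hL fnn)
    calc (μc K : ENNReal) ≤ (L fnn : ENNReal) := h1
      _ = atTop.liminf (fun n => ((μs (φ n)).toFiniteMeasure.testAgainstNN fnn : ENNReal)) :=
          h3.liminf_eq.symm
      _ ≤ atTop.liminf (fun n => (μs (φ n) : Measure X) G) :=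
          liminf_le_liminf (Eventually.of_forall h2)
  set νP : ProbabilityMeasure X := ⟨ν₀, hprob⟩ with hνP
  refine ⟨φ, νP, hφ, ?_⟩
  apply MeasureTheory.tendsto_of_forall_isOpen_le_liminf
  intro G hG
  have hE := hliminf G hG
  have aux : ((atTop.liminf fun i => ((μs ∘ φ) i) G : NNReal) : ENNReal)
      = atTop.liminf (fun i => (((μs ∘ φ) i) G : ENNReal)) := by
    refine Monotone.map_liminf_of_continuousAt (F := atTop) ENNReal.coe_mono
      (fun i => ((μs ∘ φ) i) G) ENNReal.continuous_coe.continuousAt ?_ ?_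
    · exact IsBoundedUnder.isCoboundedUnder_ge ⟨1, by simp [ProbabilityMeasure.apply_le_one]⟩
    · exact ⟨0, by simp⟩
  rw [← ENNReal.coe_le_coe, aux]
  have : ∀ i, (((μs ∘ φ) i) G : ENNReal) = (μs (φ i) : Measure X) G := by
    intro i
    exact ProbabilityMeasure.ennreal_coeFn_eq_coeFn_toMeasure _ G
  simp only [this]
  have hν₀G : ((νP G : NNReal) : ENNReal) = ν₀ G :=
    ProbabilityMeasure.ennreal_coeFn_eq_coeFn_toMeasure _ G
  rw [hν₀G]
  exact hE

end Prok


section Prok2sec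
variable {X : Type*} [MetricSpace X] [CompactSpace X] [MeasurableSpace X] [BorelSpace X]

variable {X : Type*} [MetricSpace X] [CompactSpace X] [MeasurableSpace X] [BorelSpace X]

lemma probMeasure_compactSpace : CompactSpace (ProbabilityMeasure X) := by
  haveI : TopologicalSpace.SeparableSpace X := inferInstance
  haveI : TopologicalSpace.MetrizableSpace (ProbabilityMeasure X) := inferInstance
  letI : MetricSpace (ProbabilityMeasure X) :=
    TopologicalSpace.metrizableSpaceMetric (ProbabilityMeasure X)
  rw [compactSpace_iff_seqCompactSpace]
  constructor
  intro x _
  obtain ⟨φ, ν, hφ, hten⟩ := prokhorov_subseq x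
  exact ⟨ν, mem_univ _, φ, hφ, hten⟩

lemma isClosed_le_measure {C : Set X} (hC : IsClosed C) (c : ENNReal) :
    IsClosed {μ : ProbabilityMeasure X | c ≤ (μ : Measure X) C} := by
  rw [isClosed_iff_clusterPt]
  intro μ hμ
  set Lf : Filter (ProbabilityMeasure X) := 𝓝 μ ⊓ 𝓟 {ν : ProbabilityMeasure X | c ≤ (ν : Measure X) C} with hLf
  haveI : Lf.NeBot := hμ
  have h1 : Tendsto (id : ProbabilityMeasure X → ProbabilityMeasure X) Lf (𝓝 μ) :=
    tendsto_id.mono_left inf_le_left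
  have h2 := ProbabilityMeasure.limsup_measure_closed_le_of_tendsto h1 hC
  have h3 : ∀ᶠ (ν : ProbabilityMeasure X) in Lf, c ≤ (ν : Measure X) C := by
    apply eventually_inf_principal.mpr
    exact Eventually.of_forall fun ν hν => hν
  have h4 : c ≤ Lf.limsup (fun ν : ProbabilityMeasure X => (ν : Measure X) C) := by
    exact le_limsup_of_frequently_le h3.frequently
  exact le_trans h4 h2
end Prok2sec


section UniformSmall
variable {X : Type*} [MetricSpace X] [CompactSpace X] [MeasurableSpace X] [BorelSpace X]


/-- key uniform bound -/
lemma uniform_small (N : Set (ProbabilityMeasure X)) (hN : IsClosed N)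
    (A : Set X) (hA : IsClosed A) (hAsmall : NSmall N A) (ε : ℝ) (hε : 0 < ε) :
    ∃ r : ℝ, 0 < r ∧ ∀ μ ∈ N, (μ : Measure X) (Metric.cthickening r A) < ENNReal.ofReal ε := by
  haveI : CompactSpace (ProbabilityMeasure X) := probMeasure_compactSpace
  set rs : ℕ → ℝ := fun n => 1 / ((n : ℝ) + 1) with hrs
  have hrs_pos : ∀ n, 0 < rs n := fun n => by positivity
  set S : ℕ → Set (ProbabilityMeasure X) := fun n =>
    N ∩ {μ : ProbabilityMeasure X | ENNReal.ofReal ε ≤ (μ : Measure X) (Metric.cthickening (rs n) A)}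
    with hS
  have hSclosed : ∀ n, IsClosed (S n) :=
    fun n => hN.inter (isClosed_le_measure Metric.isClosed_cthickening _)
  have hSdec : ∀ n, S (n + 1) ⊆ S n := by
    intro n μ hμ
    refine ⟨hμ.1, le_trans hμ.2 (measure_mono (Metric.cthickening_mono ?_ A))⟩
    apply one_div_le_one_div_of_le (by positivity)
    push_cast; linarith
  have hSempty : ∃ n, S n = ∅ := by
    by_contra hcon
    push_neg at hcon
    have hne : ∀ n, (S n).Nonempty := hcon
    obtain ⟨μ, hμ⟩ := IsCompact.nonempty_iInter_of_sequence_nonempty_isCompact_isClosed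
      S hSdec hne ((hSclosed 0).isCompact) hSclosed
    simp only [mem_iInter] at hμ
    have hμN : μ ∈ N := (hμ 0).1
    have htend : Tendsto (fun n => (μ : Measure X) (Metric.cthickening (rs n) A)) atTop
        (𝓝 ((μ : Measure X) A)) := by
      have h1 := tendsto_measure_cthickening_of_isClosed
        (μ := (μ : Measure X)) (s := A) ⟨1, one_pos, measure_ne_top _ _⟩ hA
      exact h1.comp tendsto_one_div_add_atTop_nhds_zero_nat
    rw [hAsmall μ hμN] at htend
    have hge : ENNReal.ofReal ε ≤ 0 :=
      ge_of_tendsto htend (Eventually.of_forall fun n => (hμ n).2)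
    simp only [nonpos_iff_eq_zero, ENNReal.ofReal_eq_zero] at hge
    linarith
  obtain ⟨n, hn⟩ := hSempty
  refine ⟨rs n, hrs_pos n, fun μ hμ => ?_⟩
  by_contra hcon
  push_neg at hcon
  have : μ ∈ S n := ⟨hμ, hcon⟩
  rw [hn] at this
  exact this
end UniformSmall


end ProkhorovAux

open Filter Set

theorem small_separation {X : Type*} [TopologicalSpace X] [CompactSpace X]
    [TopologicalSpace.MetrizableSpace X] [MeasurableSpace X] [BorelSpace X]
    (N : Set (ProbabilityMeasure X)) (hN : IsClosed N) (hSBP : NSBP N)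
    (A : Set X) (hA : IsClosed A) (hAsmall : NSmall N A)
    (V : Set X) (hV : IsOpen V) (hAV : A ⊆ V) (ε : ℝ) (hε : 0 < ε) :
    ∃ U : Set X, IsOpen U ∧ A ⊆ U ∧ closure U ⊆ V ∧ NSmall N (frontier U) ∧
      ∀ μ ∈ N, (μ : Measure X) U < ENNReal.ofReal ε := by
  letI : MetricSpace X := TopologicalSpace.metrizableSpaceMetric X
  obtain ⟨r, hr, hbound⟩ := uniform_small N hN A hA hAsmall ε hε
  obtain ⟨B, hB, hBsmall⟩ := hSBP
  set G : Set X := V ∩ Metric.thickening r A with hG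
  have hGopen : IsOpen G := hV.inter Metric.isOpen_thickening
  have hAG : A ⊆ G := subset_inter hAV (Metric.self_subset_thickening hr A)
  -- for each a ∈ A pick a basic set with closure inside G
  have hpick : ∀ a : X, a ∈ A → ∃ b, b ∈ B ∧ a ∈ b ∧ closure b ⊆ G := by
    intro a ha
    have hGnhds : G ∈ 𝓝 a := hGopen.mem_nhds (hAG ha)
    obtain ⟨C, ⟨hCnhds, hCclosed⟩, hCG⟩ := (closed_nhds_basis a).mem_iff.mp hGnhds
    have hint : interior C ∈ 𝓝 a := interior_mem_nhds.mpr hCnhds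
    obtain ⟨b, hbB, hab, hbC⟩ := hB.mem_nhds_iff.mp hint
    refine ⟨b, hbB, hab, ?_⟩
    calc closure b ⊆ closure (interior C) := closure_mono hbC
      _ ⊆ closure C := closure_mono interior_subset
      _ = C := hCclosed.closure_eq
      _ ⊆ G := hCG
  choose! b hbB hab hbG using hpick
  have hAcomp : IsCompact A := hA.isCompact
  obtain ⟨t, ht⟩ := hAcomp.elim_finite_subcover (fun a : A => b a)
    (fun a => hB.isOpen (hbB a a.2)) (fun x hx => mem_iUnion.mpr ⟨⟨x, hx⟩, hab x hx⟩)
  set U : Set X := ⋃ a ∈ t, b ↑a with hU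
  have hUopen : IsOpen U := isOpen_biUnion fun a _ => hB.isOpen (hbB a a.2)
  have hclosU : closure U = ⋃ a ∈ t, closure (b ↑a) := t.closure_biUnion _
  have hclosUG : closure U ⊆ G := by
    rw [hclosU]
    exact iUnion₂_subset fun a _ => hbG a a.2
  refine ⟨U, hUopen, ht, hclosUG.trans inter_subset_left, ?_, ?_⟩
  · -- small frontier
    intro μ hμ
    have hfr : frontier U ⊆ ⋃ a ∈ t, frontier (b ↑a) := by
      rw [hUopen.frontier_eq, hclosU]
      intro x hx
      obtain ⟨hx1, hx2⟩ := hx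
      simp only [mem_iUnion] at hx1 ⊢
      obtain ⟨a, hat, hxa⟩ := hx1
      refine ⟨a, hat, ?_⟩
      rw [(hB.isOpen (hbB a a.2)).frontier_eq]
      exact ⟨hxa, fun hxb => hx2 (mem_biUnion hat hxb)⟩
    apply measure_mono_null hfr
    rw [← Finset.set_biUnion_coe, measure_biUnion_null_iff t.countable_toSet]
    exact fun a _ => hBsmall _ (hbB a a.2) μ hμ
  · intro μ hμ
    have : U ⊆ Metric.cthickening r A := by
      calc U ⊆ closure U := subset_closure
        _ ⊆ G := hclosUG
        _ ⊆ Metric.thickening r A := inter_subset_right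
        _ ⊆ Metric.cthickening r A := Metric.thickening_subset_cthickening r A
    exact lt_of_le_of_lt (measure_mono this) (hbound μ hμ)
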